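/- Let X₁,…,X_r be multinomial counts from K independent trials with cell probabilities p₁ = ⋯ = p_r = p, p_{r+1} = 1 - rp, 0 ≤ p ≤ 1/r. Then P(X₁ ≥ 2, …, X_r ≥ 2) = Σ_{k=0}^{r} (-1)^k · C(r,k) · Σ_{j=0}^{k} C(k,j) · (K!/(K-j)!) · p^j · (1 - kp)^{K-j}. -/

import Mathlib

open scoped BigOperators Classical

open Finset

private def cnt {K n : ℕ} (f : Fin K → Fin n) (j : Fin n) : ℕ :=
  ∑ i : Fin K, if f i = j then 1 else 0

private lemma cnt_cons {K n : ℕ} (x : Fin n) (g : Fin K → Fin n) (j : Fin n) :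
    cnt (Fin.cons x g) j = (if x = j then 1 else 0) + cnt g j := by
  unfold cnt
  rw [Fin.sum_univ_succ]
  simp only [Fin.cons_zero, Fin.cons_succ]

private lemma cnt_card {K n : ℕ} (f : Fin K → Fin n) (j : Fin n) :
    cnt f j = (Finset.univ.filter (fun i => f i = j)).card := by
  rw [Finset.card_filter]; rfl

private lemma desc_succ (K j : ℕ) :
    (K + 1).descFactorial j = j * K.descFactorial (j - 1) + K.descFactorial j := by
  cases j with
  | zero => simp
  | succ j =>
    rw [Nat.succ_descFactorial_succ, Nat.descFactorial_succ, Nat.succ_sub_one]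
    rcases le_or_gt j K with h | h
    · have hK : K + 1 = (j + 1) + (K - j) := by omega
      rw [hK, Nat.add_mul]
    · rw [Nat.descFactorial_of_lt h]; simp

private def F (p q : ℝ) (K k : ℕ) : ℝ :=
  ∑ j ∈ range (k + 1), (k.choose j : ℝ) * (K.descFactorial j : ℝ) * p ^ j * q ^ (K - j)

private lemma F_zero (p q : ℝ) (k : ℕ) : F p q 0 k = 1 := by
  unfold F
  rw [Finset.sum_eq_single 0]
  · simp
  · intro j _ hj
    obtain ⟨m, rfl⟩ := Nat.exists_eq_succ_of_ne_zero hj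
    simp [Nat.zero_descFactorial_succ]
  · simp

private lemma F_succ_zero (p q : ℝ) (K : ℕ) : F p q (K + 1) 0 = q * F p q K 0 := by
  simp [F, pow_succ]; ring

private lemma F_succ (p q : ℝ) (K k : ℕ) :
    F p q (K + 1) (k + 1) = (k + 1 : ℝ) * p * F p q K k + q * F p q K (k + 1) := by
  have hB : ∀ j ∈ range (k + 2),
      (((k+1).choose j : ℝ)) * (K.descFactorial j : ℝ) * p ^ j * q ^ (K + 1 - j)
        = q * ((((k+1).choose j : ℝ)) * (K.descFactorial j : ℝ) * p ^ j * q ^ (K - j)) := by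
    intro j _
    rcases le_or_gt j K with h | h
    · have : K + 1 - j = (K - j) + 1 := by omega
      rw [this, pow_succ]; ring
    · rw [Nat.descFactorial_of_lt h]; simp
  have step1 : F p q (K + 1) (k + 1)
      = (∑ j ∈ range (k + 2),
          ((k+1).choose j : ℝ) * ((j : ℝ) * (K.descFactorial (j - 1) : ℝ)) * p ^ j * q ^ (K + 1 - j))
        + (∑ j ∈ range (k + 2),
          ((k+1).choose j : ℝ) * (K.descFactorial j : ℝ) * p ^ j * q ^ (K + 1 - j)) := by
    unfold F
    rw [← sum_add_distrib]
    apply sum_congr rfl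
    intro j _
    rw [desc_succ]
    push_cast
    ring
  rw [step1]
  congr 1
  · rw [Finset.sum_range_succ']
    simp only [Nat.cast_zero, zero_mul, mul_zero, zero_mul, add_zero]
    unfold F
    rw [Finset.mul_sum]
    apply sum_congr rfl
    intro j _
    have hs : K + 1 - (j + 1) = K - j := Nat.succ_sub_succ K j
    rw [hs, Nat.add_sub_cancel, pow_succ]
    have hc := Nat.add_one_mul_choose_eq k j
    have hcr : (((k+1) * k.choose j : ℕ) : ℝ) = (((k+1).choose (j+1) * (j+1) : ℕ) : ℝ) := by
      exact_mod_cast congrArg (Nat.cast : ℕ → ℝ) hc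
    push_cast at hcr ⊢
    linear_combination (-(K.descFactorial j : ℝ) * (p ^ j * p) * q ^ (K - j)) * hcr
  · rw [sum_congr rfl hB, ← mul_sum]
    rfl

private lemma core (n : ℕ) (w : Fin n → ℝ) (p : ℝ) :
    ∀ (K : ℕ) (S A : Finset (Fin n)), Disjoint S A → (∀ c ∈ S, w c = p) →
    (∑ f : Fin K → Fin n,
        if (∀ j ∈ S, cnt f j ≤ 1) ∧ (∀ j ∈ A, cnt f j = 0) then ∏ i, w (f i) else 0)
      = F p (∑ c ∈ (S ∪ A)ᶜ, w c) K S.card := by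
  intro K
  induction K with
  | zero =>
    intro S A _ _
    rw [F_zero]
    have h1 : ∀ f : Fin 0 → Fin n,
        (if (∀ j ∈ S, cnt f j ≤ 1) ∧ (∀ j ∈ A, cnt f j = 0) then ∏ i, w (f i) else 0) = 1 := by
      intro f
      rw [if_pos]
      · exact Finset.prod_of_isEmpty _
      · constructor
        · intro j _; simp [cnt]
        · intro j _; simp [cnt]
    rw [Finset.sum_congr rfl (fun f _ => h1 f), Finset.sum_const]
    simp
  | succ K IH =>
    intro S A hSA hw
    set q : ℝ := ∑ c ∈ (S ∪ A)ᶜ, w c with hq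
    -- reindex over Fin.cons
    have hre : (∑ f : Fin (K+1) → Fin n,
        if (∀ j ∈ S, cnt f j ≤ 1) ∧ (∀ j ∈ A, cnt f j = 0) then ∏ i, w (f i) else 0)
      = ∑ x : Fin n, ∑ g : Fin K → Fin n,
          (if (∀ j ∈ S, cnt (Fin.cons x g) j ≤ 1) ∧ (∀ j ∈ A, cnt (Fin.cons x g) j = 0)
            then w x * ∏ i, w (g i) else 0) := by
      rw [← Equiv.sum_comp (Fin.consEquiv (fun _ : Fin (K+1) => Fin n))
            (fun f => if (∀ j ∈ S, cnt f j ≤ 1) ∧ (∀ j ∈ A, cnt f j = 0)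
              then ∏ i, w (f i) else 0), Fintype.sum_prod_type]
      apply Finset.sum_congr rfl
      intro x _
      apply Finset.sum_congr rfl
      intro g _
      rw [show (Fin.consEquiv (fun _ : Fin (K+1) => Fin n)) (x, g) = Fin.cons x g from rfl]
      rw [Fin.prod_univ_succ]
      simp only [Fin.cons_zero, Fin.cons_succ]
    rw [hre]
    -- split the x-sum into S, A, complement
    rw [← Finset.sum_add_sum_compl (S ∪ A), Finset.sum_union hSA]
    have claimS : ∀ x ∈ S, (∑ g : Fin K → Fin n,
        (if (∀ j ∈ S, cnt (Fin.cons x g) j ≤ 1) ∧ (∀ j ∈ A, cnt (Fin.cons x g) j = 0)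
          then w x * ∏ i, w (g i) else 0)) = p * F p q K (S.card - 1) := by
      intro x hx
      have hxA : x ∉ A := Finset.disjoint_left.mp hSA hx
      have hcond : ∀ g : Fin K → Fin n,
          ((∀ j ∈ S, cnt (Fin.cons x g) j ≤ 1) ∧ (∀ j ∈ A, cnt (Fin.cons x g) j = 0))
          ↔ ((∀ j ∈ S.erase x, cnt g j ≤ 1) ∧ (∀ j ∈ insert x A, cnt g j = 0)) := by
        intro g
        constructor
        · rintro ⟨h1, h2⟩
          constructor
          · intro j hj
            have := h1 j (Finset.mem_of_mem_erase hj)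
            rw [cnt_cons, if_neg (Finset.ne_of_mem_erase hj).symm] at this
            omega
          · intro j hj
            rcases Finset.mem_insert.mp hj with rfl | hj
            · have := h1 j hx
              rw [cnt_cons, if_pos rfl] at this
              omega
            · have := h2 j hj
              rw [cnt_cons] at this
              omega
        · rintro ⟨h1, h2⟩
          constructor
          · intro j hj
            rw [cnt_cons]
            by_cases hxj : x = j
            · subst hxj
              have := h2 x (Finset.mem_insert_self x A)
              simp [this]
            · have := h1 j (Finset.mem_erase.mpr ⟨fun h => hxj h.symm, hj⟩)
              rw [if_neg hxj]
              omega
          · intro j hj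
            rw [cnt_cons, if_neg (by rintro rfl; exact hxA hj)]
            have := h2 j (Finset.mem_insert_of_mem hj)
            omega
      have hre2 : (∑ g : Fin K → Fin n,
          (if (∀ j ∈ S, cnt (Fin.cons x g) j ≤ 1) ∧ (∀ j ∈ A, cnt (Fin.cons x g) j = 0)
            then w x * ∏ i, w (g i) else 0))
          = w x * ∑ g : Fin K → Fin n,
            (if (∀ j ∈ S.erase x, cnt g j ≤ 1) ∧ (∀ j ∈ insert x A, cnt g j = 0)
              then ∏ i, w (g i) else 0) := by
        rw [Finset.mul_sum]
        apply Finset.sum_congr rfl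
        intro g _
        rw [mul_ite, mul_zero]
        exact if_congr (hcond g) rfl rfl
      rw [hre2]
      have hdisj : Disjoint (S.erase x) (insert x A) := by
        rw [Finset.disjoint_insert_right]
        exact ⟨Finset.notMem_erase x S, Finset.disjoint_of_subset_left (Finset.erase_subset x S) hSA⟩
      rw [IH (S.erase x) (insert x A) hdisj (fun c hc => hw c (Finset.mem_of_mem_erase hc))]
      have hu : S.erase x ∪ insert x A = S ∪ A := by
        ext a
        simp only [Finset.mem_union, Finset.mem_erase, Finset.mem_insert]
        constructor
        · rintro (⟨_, h⟩ | rfl | h)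
          · exact Or.inl h
          · exact Or.inl hx
          · exact Or.inr h
        · rintro (h | h)
          · by_cases hax : a = x
            · exact Or.inr (Or.inl hax)
            · exact Or.inl ⟨hax, h⟩
          · exact Or.inr (Or.inr h)
      rw [hu, Finset.card_erase_of_mem hx, hw x hx, ← hq]
    have claimA : ∀ x ∈ A, (∑ g : Fin K → Fin n,
        (if (∀ j ∈ S, cnt (Fin.cons x g) j ≤ 1) ∧ (∀ j ∈ A, cnt (Fin.cons x g) j = 0)
          then w x * ∏ i, w (g i) else 0)) = 0 := by
      intro x hx
      apply Finset.sum_eq_zero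
      intro g _
      rw [if_neg]
      rintro ⟨_, h2⟩
      have := h2 x hx
      rw [cnt_cons, if_pos rfl] at this
      omega
    have claimC : ∀ x ∈ (S ∪ A)ᶜ, (∑ g : Fin K → Fin n,
        (if (∀ j ∈ S, cnt (Fin.cons x g) j ≤ 1) ∧ (∀ j ∈ A, cnt (Fin.cons x g) j = 0)
          then w x * ∏ i, w (g i) else 0)) = w x * F p q K S.card := by
      intro x hx
      rw [Finset.mem_compl, Finset.mem_union] at hx
      push_neg at hx
      obtain ⟨hxS, hxA⟩ := hx
      have hcond : ∀ g : Fin K → Fin n,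
          ((∀ j ∈ S, cnt (Fin.cons x g) j ≤ 1) ∧ (∀ j ∈ A, cnt (Fin.cons x g) j = 0))
          ↔ ((∀ j ∈ S, cnt g j ≤ 1) ∧ (∀ j ∈ A, cnt g j = 0)) := by
        intro g
        have hkey : ∀ j, j ∈ S ∨ j ∈ A → cnt (Fin.cons x g) j = cnt g j := by
          intro j hj
          rw [cnt_cons, if_neg, zero_add]
          rintro rfl
          rcases hj with h | h
          · exact hxS h
          · exact hxA h
        constructor
        · rintro ⟨h1, h2⟩
          exact ⟨fun j hj => (hkey j (Or.inl hj)) ▸ h1 j hj,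
                 fun j hj => (hkey j (Or.inr hj)) ▸ h2 j hj⟩
        · rintro ⟨h1, h2⟩
          exact ⟨fun j hj => (hkey j (Or.inl hj)).symm ▸ h1 j hj,
                 fun j hj => (hkey j (Or.inr hj)).symm ▸ h2 j hj⟩
      have hre2 : (∑ g : Fin K → Fin n,
          (if (∀ j ∈ S, cnt (Fin.cons x g) j ≤ 1) ∧ (∀ j ∈ A, cnt (Fin.cons x g) j = 0)
            then w x * ∏ i, w (g i) else 0))
          = w x * ∑ g : Fin K → Fin n,
            (if (∀ j ∈ S, cnt g j ≤ 1) ∧ (∀ j ∈ A, cnt g j = 0)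
              then ∏ i, w (g i) else 0) := by
        rw [Finset.mul_sum]
        apply Finset.sum_congr rfl
        intro g _
        rw [mul_ite, mul_zero]
        exact if_congr (hcond g) rfl rfl
      rw [hre2, IH S A hSA hw]
    rw [Finset.sum_congr rfl claimS, Finset.sum_congr rfl claimA,
        Finset.sum_congr rfl claimC, Finset.sum_const, Finset.sum_const_zero,
        ← Finset.sum_mul]
    rw [← hq]
    cases hk : S.card with
    | zero =>
      rw [F_succ_zero]
      simp
    | succ k =>
      rw [F_succ]
      simp only [Nat.succ_sub_one, nsmul_eq_mul, hk]
      push_cast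
      ring

theorem stmt11 (K r : ℕ) (hr : 1 ≤ r) (p : ℝ) (hp : 0 ≤ p) (hp' : p ≤ 1 / (r : ℝ)) :
    -- The probability that every one of the r cells receives at least two of the K i.i.d.
    -- trials, where each trial lands in each of the first r cells with probability p and in
    -- the dump cell with probability 1 - r p.
    (∑ f : Fin K → Fin (r + 1),
        (if ∀ j : Fin (r + 1), (j : ℕ) < r →
            ∃ i₁ i₂ : Fin K, i₁ ≠ i₂ ∧ f i₁ = j ∧ f i₂ = j then
          ∏ i : Fin K, (if (f i : ℕ) < r then p else 1 - (r : ℝ) * p)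
        else 0))
      = ∑ k ∈ Finset.range (r + 1), (-1 : ℝ) ^ k * (r.choose k : ℝ) *
          ∑ j ∈ Finset.range (k + 1), (k.choose j : ℝ) * (K.descFactorial j : ℝ) *
            p ^ j * (1 - (k : ℝ) * p) ^ (K - j) := by
  classical
  set w : Fin (r + 1) → ℝ := fun j => if (j : ℕ) < r then p else 1 - (r : ℝ) * p with hwdef
  set R : Finset (Fin (r + 1)) := Finset.univ.filter (fun j => (j : ℕ) < r) with hRdef
  have hmemR : ∀ j : Fin (r + 1), j ∈ R ↔ (j : ℕ) < r := by
    intro j; simp [hRdef]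
  have hRc : R = ({Fin.last r} : Finset (Fin (r + 1)))ᶜ := by
    ext j
    have hj := j.isLt
    simp only [hmemR, Finset.mem_compl, Finset.mem_singleton, Fin.ext_iff, Fin.val_last]
    omega
  have hcardR : R.card = r := by
    rw [hRc, Finset.card_compl, Finset.card_singleton, Fintype.card_fin]
    omega
  have hwp : ∀ c ∈ R, w c = p := by
    intro c hc
    rw [hwdef]
    exact if_pos ((hmemR c).mp hc)
  have hsumw : ∑ c : Fin (r + 1), w c = 1 := by
    rw [← Finset.sum_add_sum_compl R w]
    have h1 : ∑ c ∈ R, w c = (r : ℝ) * p := by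
      rw [Finset.sum_congr rfl hwp, Finset.sum_const, hcardR, nsmul_eq_mul]
    have h2 : Rᶜ = ({Fin.last r} : Finset (Fin (r + 1))) := by rw [hRc, compl_compl]
    have h3 : ∑ c ∈ Rᶜ, w c = 1 - (r : ℝ) * p := by
      rw [h2, Finset.sum_singleton, hwdef]
      simp
    rw [h1, h3]
    ring
  have hq : ∀ S : Finset (Fin (r + 1)), S ⊆ R → ∑ c ∈ Sᶜ, w c = 1 - (S.card : ℝ) * p := by
    intro S hS
    have h1 : ∑ c ∈ S, w c = (S.card : ℝ) * p := by
      rw [Finset.sum_congr rfl (fun c hc => hwp c (hS hc)), Finset.sum_const, nsmul_eq_mul]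
    have h2 := Finset.sum_add_sum_compl S w
    rw [hsumw] at h2
    linarith
  have hkey : ∀ f : Fin K → Fin (r + 1),
      (if ∀ j : Fin (r + 1), (j : ℕ) < r →
          ∃ i₁ i₂ : Fin K, i₁ ≠ i₂ ∧ f i₁ = j ∧ f i₂ = j then
        ∏ i : Fin K, w (f i) else 0)
      = ∑ S ∈ R.powerset, (-1 : ℝ) ^ S.card *
          (if (∀ j ∈ S, cnt f j ≤ 1) ∧ (∀ j ∈ (∅ : Finset (Fin (r + 1))), cnt f j = 0)
            then ∏ i : Fin K, w (f i) else 0) := by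
    intro f
    set B : Finset (Fin (r + 1)) := R.filter (fun j => cnt f j ≤ 1) with hBdef
    have hBR : B ⊆ R := Finset.filter_subset _ _
    have step1 : ∀ S ∈ R.powerset, (-1 : ℝ) ^ S.card *
          (if (∀ j ∈ S, cnt f j ≤ 1) ∧ (∀ j ∈ (∅ : Finset (Fin (r + 1))), cnt f j = 0)
            then ∏ i : Fin K, w (f i) else 0)
        = (if S ⊆ B then (-1 : ℝ) ^ S.card * ∏ i : Fin K, w (f i) else 0) := by
      intro S hS
      rw [Finset.mem_powerset] at hS
      by_cases h : S ⊆ B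
      · rw [if_pos h, if_pos]
        constructor
        · intro j hj
          exact (Finset.mem_filter.mp (h hj)).2
        · intro j hj
          exact absurd hj (Finset.notMem_empty j)
      · rw [if_neg h, if_neg, mul_zero]
        rintro ⟨h1, _⟩
        exact h (fun j hj => Finset.mem_filter.mpr ⟨hS hj, h1 j hj⟩)
    rw [Finset.sum_congr rfl step1, ← Finset.sum_filter]
    have step2 : R.powerset.filter (fun S => S ⊆ B) = B.powerset := by
      ext S
      simp only [Finset.mem_filter, Finset.mem_powerset]
      exact ⟨fun h => h.2, fun h => ⟨h.trans hBR, h⟩⟩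
    rw [step2, ← Finset.sum_mul]
    have hint : (∑ S ∈ B.powerset, (-1 : ℝ) ^ S.card) = if B = ∅ then 1 else 0 := by
      have hz := Finset.sum_powerset_neg_one_pow_card (x := B)
      have : (∑ S ∈ B.powerset, (-1 : ℝ) ^ S.card)
          = ((∑ S ∈ B.powerset, (-1 : ℤ) ^ S.card : ℤ) : ℝ) := by
        push_cast; rfl
      rw [this, hz]
      split <;> norm_num
    rw [hint]
    have hcond : (∀ j : Fin (r + 1), (j : ℕ) < r →
        ∃ i₁ i₂ : Fin K, i₁ ≠ i₂ ∧ f i₁ = j ∧ f i₂ = j) ↔ B = ∅ := by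
      rw [hBdef, Finset.filter_eq_empty_iff]
      constructor
      · intro h j hj
        obtain ⟨i₁, i₂, hne, h1, h2⟩ := h j ((hmemR j).mp hj)
        intro hle
        have h2' : 1 < cnt f j := by
          rw [cnt_card]
          exact Finset.one_lt_card.mpr ⟨i₁, Finset.mem_filter.mpr ⟨Finset.mem_univ _, h1⟩,
            i₂, Finset.mem_filter.mpr ⟨Finset.mem_univ _, h2⟩, hne⟩
        omega
      · intro h j hj
        have := h ((hmemR j).mpr hj)
        have h2' : 1 < cnt f j := by omega
        rw [cnt_card] at h2'
        obtain ⟨a, ha, b, hb, hab⟩ := Finset.one_lt_card.mp h2'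
        exact ⟨a, b, hab, (Finset.mem_filter.mp ha).2, (Finset.mem_filter.mp hb).2⟩
    by_cases hc : ∀ j : Fin (r + 1), (j : ℕ) < r →
        ∃ i₁ i₂ : Fin K, i₁ ≠ i₂ ∧ f i₁ = j ∧ f i₂ = j
    · rw [if_pos hc, if_pos (hcond.mp hc), one_mul]
    · rw [if_neg hc, if_neg (fun hB => hc (hcond.mpr hB)), zero_mul]
  calc (∑ f : Fin K → Fin (r + 1),
        (if ∀ j : Fin (r + 1), (j : ℕ) < r →
            ∃ i₁ i₂ : Fin K, i₁ ≠ i₂ ∧ f i₁ = j ∧ f i₂ = j then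
          ∏ i : Fin K, (if (f i : ℕ) < r then p else 1 - (r : ℝ) * p)
        else 0))
      = ∑ f : Fin K → Fin (r + 1), ∑ S ∈ R.powerset, (-1 : ℝ) ^ S.card *
          (if (∀ j ∈ S, cnt f j ≤ 1) ∧ (∀ j ∈ (∅ : Finset (Fin (r + 1))), cnt f j = 0)
            then ∏ i : Fin K, w (f i) else 0) :=
        Finset.sum_congr rfl (fun f _ => hkey f)
    _ = ∑ S ∈ R.powerset, ∑ f : Fin K → Fin (r + 1), (-1 : ℝ) ^ S.card *
          (if (∀ j ∈ S, cnt f j ≤ 1) ∧ (∀ j ∈ (∅ : Finset (Fin (r + 1))), cnt f j = 0)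
            then ∏ i : Fin K, w (f i) else 0) := Finset.sum_comm
    _ = ∑ S ∈ R.powerset, (-1 : ℝ) ^ S.card * F p (1 - (S.card : ℝ) * p) K S.card := by
        apply Finset.sum_congr rfl
        intro S hS
        rw [Finset.mem_powerset] at hS
        rw [← Finset.mul_sum,
          core (r + 1) w p K S ∅ (Finset.disjoint_empty_right S) (fun c hc => hwp c (hS hc)),
          Finset.union_empty, hq S hS]
    _ = ∑ k ∈ Finset.range (r + 1), ∑ S ∈ Finset.powersetCard k R,
          (-1 : ℝ) ^ S.card * F p (1 - (S.card : ℝ) * p) K S.card := by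
        rw [Finset.sum_powerset, hcardR]
    _ = ∑ k ∈ Finset.range (r + 1), (-1 : ℝ) ^ k * (r.choose k : ℝ) *
          ∑ j ∈ Finset.range (k + 1), (k.choose j : ℝ) * (K.descFactorial j : ℝ) *
            p ^ j * (1 - (k : ℝ) * p) ^ (K - j) := by
        apply Finset.sum_congr rfl
        intro k _
        have hterm : ∀ S ∈ Finset.powersetCard k R,
            (-1 : ℝ) ^ S.card * F p (1 - (S.card : ℝ) * p) K S.card
              = (-1 : ℝ) ^ k * F p (1 - (k : ℝ) * p) K k := by
          intro S hS
          rw [(Finset.mem_powersetCard.mp hS).2]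
        rw [Finset.sum_congr rfl hterm, Finset.sum_const, Finset.card_powersetCard, hcardR,
          nsmul_eq_mul]
        unfold F
        ring
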